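/- arXiv:1607.08013 — 3 statements merged into one kernel-verified Lean document; each statement's English description precedes it below -/
import Mathlib

section
/- Let μ_n (n ∈ ℕ) and μ be Borel probability measures on ℝ such that every polynomial with real coefficients is integrable with respect to each μ_n and with respect to μ. Suppose (1) for every polynomial p ∈ ℝ[x], lim_{n→∞} ∫ p dμ_n = ∫ p dμ, and (2) μ is characterized by its moments, i.e., any Borel probability measure ν on ℝ for which all polynomials are integrable and which satisfies ∫ x^k dν = ∫ x^k dμ for all k ∈ ℕ must equal μ. Then μ_n converges weakly to μ. -/
open MeasureTheory Filter Set
open scoped BoundedContinuousFunction Topology ENNReal NNReal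

lemma sum_setIntegral_Ioc (κ : Measure ℝ) (f : ℝ → ℝ) (hf : Integrable f κ)
    (t : ℕ → ℝ) (ht : Monotone t) (N : ℕ) :
    ∑ i ∈ Finset.range N, ∫ x in Ioc (t i) (t (i+1)), f x ∂κ
      = ∫ x in Ioc (t 0) (t N), f x ∂κ := by
  induction N with
  | zero => simp
  | succ N ih =>
    rw [Finset.sum_range_succ, ih, ← setIntegral_union (f := f)
      (Set.Ioc_disjoint_Ioc.2 (by simp [ht (Nat.zero_le N)]))
      measurableSet_Ioc hf.integrableOn hf.integrableOn,
      Set.Ioc_union_Ioc_eq_Ioc (ht (Nat.zero_le N)) (ht (Nat.le_succ N))]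

lemma riemann_approx (κ : Measure ℝ) [IsProbabilityMeasure κ] (f : ℝ →ᵇ ℝ)
    (t : ℕ → ℝ) (ht : Monotone t) (N : ℕ) {ε : ℝ} (hε : 0 ≤ ε)
    (hosc : ∀ i, i < N → ∀ x ∈ Ioc (t i) (t (i+1)), |f x - f (t (i+1))| ≤ ε) :
    |∫ x, f x ∂κ - ∑ i ∈ Finset.range N, f (t (i+1)) * (κ (Ioc (t i) (t (i+1)))).toReal|
      ≤ ε + ‖f‖ * ((κ (Iic (t 0))).toReal + (κ (Ioi (t N))).toReal) := by
  have hfi : Integrable (fun x => f x) κ := f.integrable κ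
  have hcompl : Iic (t 0) ∪ Ioi (t N) = (Ioc (t 0) (t N))ᶜ := by
    ext x
    simp only [mem_union, mem_Iic, mem_Ioi, mem_compl_iff, mem_Ioc, not_and_or, not_lt, not_le]
  have hsplit : ∫ x, f x ∂κ = (∫ x in Ioc (t 0) (t N), f x ∂κ)
      + ((∫ x in Iic (t 0), f x ∂κ) + (∫ x in Ioi (t N), f x ∂κ)) := by
    rw [← setIntegral_union (Set.Iic_disjoint_Ioi (ht (Nat.zero_le N))) measurableSet_Ioi
      hfi.integrableOn hfi.integrableOn, hcompl, integral_add_compl measurableSet_Ioc hfi]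
  have hmeas_le : ∀ s : Set ℝ, (κ s).toReal ≤ 1 := by
    intro s
    have h : κ s ≤ 1 := prob_le_one
    simpa using ENNReal.toReal_mono (by simp) h
  have hpiece : ∀ i, i < N →
      |(∫ x in Ioc (t i) (t (i+1)), f x ∂κ) - f (t (i+1)) * (κ (Ioc (t i) (t (i+1)))).toReal|
        ≤ ε * (κ (Ioc (t i) (t (i+1)))).toReal := by
    intro i hi
    have h1 : (∫ x in Ioc (t i) (t (i+1)), f x ∂κ) - f (t (i+1)) * (κ (Ioc (t i) (t (i+1)))).toReal
        = ∫ x in Ioc (t i) (t (i+1)), (f x - f (t (i+1))) ∂κ := by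
      rw [integral_sub hfi.integrableOn (integrableOn_const (measure_lt_top _ _).ne)]
      rw [setIntegral_const, smul_eq_mul, mul_comm, measureReal_def]
    rw [h1, ← Real.norm_eq_abs]
    refine norm_setIntegral_le_of_norm_le_const (measure_lt_top _ _) ?_
    intro x hx
    simpa [Real.norm_eq_abs] using hosc i hi x hx
  have hsum1 : ∑ i ∈ Finset.range N, (κ (Ioc (t i) (t (i+1)))).toReal
      = (κ (Ioc (t 0) (t N))).toReal := by
    have h := sum_setIntegral_Ioc κ (fun _ => (1:ℝ)) (integrable_const 1) t ht N
    simpa [setIntegral_const, measureReal_def] using h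
  have htail : ∀ s : Set ℝ, MeasurableSet s → |∫ x in s, f x ∂κ| ≤ ‖f‖ * (κ s).toReal := by
    intro s hs
    rw [← Real.norm_eq_abs]
    exact norm_setIntegral_le_of_norm_le_const (measure_lt_top _ _)
      (fun x _ => f.norm_coe_le_norm x)
  have hIS : |(∫ x in Ioc (t 0) (t N), f x ∂κ)
      - ∑ i ∈ Finset.range N, f (t (i+1)) * (κ (Ioc (t i) (t (i+1)))).toReal| ≤ ε := by
    rw [← sum_setIntegral_Ioc κ (fun x => f x) hfi t ht N, ← Finset.sum_sub_distrib]
    refine (Finset.abs_sum_le_sum_abs _ _).trans ?_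
    calc ∑ i ∈ Finset.range N,
          |(∫ x in Ioc (t i) (t (i+1)), f x ∂κ) - f (t (i+1)) * (κ (Ioc (t i) (t (i+1)))).toReal|
        ≤ ∑ i ∈ Finset.range N, ε * (κ (Ioc (t i) (t (i+1)))).toReal :=
          Finset.sum_le_sum fun i hi => hpiece i (Finset.mem_range.1 hi)
      _ = ε * (κ (Ioc (t 0) (t N))).toReal := by rw [← Finset.mul_sum, hsum1]
      _ ≤ ε * 1 := by
          have := hmeas_le (Ioc (t 0) (t N))
          nlinarith
      _ = ε := mul_one ε
  have e1 := htail (Iic (t 0)) measurableSet_Iic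
  have e2 := htail (Ioi (t N)) measurableSet_Ioi
  rw [hsplit]
  have harr : (∫ x in Ioc (t 0) (t N), f x ∂κ)
      + ((∫ x in Iic (t 0), f x ∂κ) + (∫ x in Ioi (t N), f x ∂κ))
      - ∑ i ∈ Finset.range N, f (t (i+1)) * (κ (Ioc (t i) (t (i+1)))).toReal
      = ((∫ x in Ioc (t 0) (t N), f x ∂κ)
          - ∑ i ∈ Finset.range N, f (t (i+1)) * (κ (Ioc (t i) (t (i+1)))).toReal)
        + ((∫ x in Iic (t 0), f x ∂κ) + (∫ x in Ioi (t N), f x ∂κ)) := by ring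
  rw [harr, mul_add]
  calc |_ + _| ≤ _ := abs_add_le _ _
    _ ≤ ε + (‖f‖ * (κ (Iic (t 0))).toReal + ‖f‖ * (κ (Ioi (t N))).toReal) := by
        refine add_le_add hIS ((abs_add_le _ _).trans (add_le_add e1 e2))

lemma exists_grid {D : Set ℝ} (hD : D.Countable) (A δ : ℝ) (hA : 1 ≤ A) (hδ : 0 < δ) :
    ∃ (N : ℕ) (t : ℕ → ℝ), (∀ i, t i ∉ D) ∧ (∀ i, t i < t (i+1)) ∧
      t 0 ≤ -A ∧ A ≤ t N ∧ (∀ i, t (i+1) - t i < δ) ∧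
      (∀ i, i ≤ N → t i ∈ Icc (-A-1) (A+2)) := by
  have hDc : Dense Dᶜ := hD.dense_compl ℝ
  obtain ⟨h, hh0, hh1, hhδ⟩ : ∃ h : ℝ, 0 < h ∧ h ≤ 1 ∧ h ≤ δ/2 :=
    ⟨min (δ/2) 1, by positivity, min_le_right _ _, min_le_left _ _⟩
  have hex : ∀ i : ℕ, ∃ x, x ∈ Dᶜ ∧ x ∈ Ioo (-A-1+i*h) (-A-1+i*h + h/4) := by
    intro i
    obtain ⟨x, hx1, hx2⟩ := hDc.exists_mem_open isOpen_Ioo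
      (Set.nonempty_Ioo.2 (show -A-1+i*h < -A-1+i*h + h/4 by linarith))
    exact ⟨x, hx1, hx2⟩
  choose t htD htI using hex
  obtain ⟨N, hNh, hNh2⟩ : ∃ N : ℕ, 2*A+1 ≤ N*h ∧ (N:ℝ)*h ≤ 2*A+1+h := by
    refine ⟨⌈(2*A+1)/h⌉₊, ?_, ?_⟩
    · have := Nat.le_ceil ((2*A+1)/h)
      calc 2*A+1 = ((2*A+1)/h) * h := by field_simp
        _ ≤ (⌈(2*A+1)/h⌉₊ : ℝ) * h := by gcongr
    · have h0 : (0:ℝ) ≤ (2*A+1)/h := by positivity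
      calc (⌈(2*A+1)/h⌉₊ : ℝ) * h ≤ ((2*A+1)/h + 1) * h := by
            gcongr; exact (Nat.ceil_lt_add_one h0).le
        _ = 2*A+1+h := by field_simp
  have hstep : ∀ i : ℕ, (-A-1+(i+1:ℕ)*h : ℝ) = -A-1+i*h + h := by
    intro i; push_cast; ring
  refine ⟨N, t, fun i => htD i, ?_, ?_, ?_, ?_, ?_⟩
  · intro i
    have h1 := (htI i).2
    have h2 := (htI (i+1)).1
    rw [hstep i] at h2
    linarith
  · have h1 := (htI 0).2
    simp only [Nat.cast_zero, zero_mul, add_zero] at h1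
    linarith
  · have h2 := (htI N).1
    linarith
  · intro i
    have h1 := (htI i).1
    have h2 := (htI (i+1)).2
    rw [hstep i] at h2
    linarith
  · intro i hi
    have h1 := (htI i).1
    have h2 := (htI i).2
    have hiN : (i:ℝ) ≤ N := Nat.cast_le.2 hi
    have hih : (i:ℝ)*h ≤ N*h := by nlinarith
    have h0i : (0:ℝ) ≤ (i:ℝ)*h := by positivity
    exact ⟨by linarith, by linarith⟩

lemma tendsto_of_forall_approx {u : ℕ → ℝ} {l : ℝ} {L : Filter ℕ}
    (h : ∀ ε : ℝ, 0 < ε → ∃ (S : ℕ → ℝ) (c : ℝ), Tendsto S L (𝓝 c) ∧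
      (∀ n, |u n - S n| ≤ ε) ∧ |l - c| ≤ ε) :
    Tendsto u L (𝓝 l) := by
  rw [Metric.tendsto_nhds]
  intro ε hε
  obtain ⟨S, c, hS, hu, hl⟩ := h (ε/4) (by linarith)
  filter_upwards [Metric.tendsto_nhds.mp hS (ε/4) (by linarith)] with n hn
  have h1 := hu n
  rw [Real.dist_eq] at hn ⊢
  have : |u n - l| ≤ |u n - S n| + |S n - c| + |c - l| := by
    have := abs_add_le (u n - S n) (S n - c)
    have := abs_add_le (u n - S n + (S n - c)) (c - l)
    have e : u n - l = (u n - S n) + (S n - c) + (c - l) := by ring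
    rw [e]
    linarith [abs_add_le ((u n - S n) + (S n - c)) (c - l), abs_add_le (u n - S n) (S n - c)]
  have hcl : |c - l| ≤ ε/4 := by rw [abs_sub_comm]; exact hl
  linarith

lemma key_ultra (μs : ℕ → Measure ℝ) [∀ n, IsProbabilityMeasure (μs n)]
    (U : Ultrafilter ℕ) {M : ℝ} (hM0 : 0 ≤ M)
    (hM : ∀ n, ∫ x, x^2 ∂(μs n) ≤ M)
    (hint2 : ∀ n, Integrable (fun x => x^2) (μs n)) :
    ∃ ν : Measure ℝ, IsProbabilityMeasure ν ∧
      ∀ g : BoundedContinuousFunction ℝ ℝ,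
        Tendsto (fun n => ∫ x, g x ∂(μs n)) (U : Filter ℕ) (𝓝 (∫ x, g x ∂ν)) := by
  classical
  -- toReal facts
  have htR1 : ∀ (κ : Measure ℝ) [IsProbabilityMeasure κ] (s : Set ℝ), (κ s).toReal ≤ 1 := by
    intro κ _ s
    simpa using ENNReal.toReal_mono (by simp) (prob_le_one (μ := κ) (s := s))
  -- Step 1: ultrafilter limits of CDFs
  have hlim : ∀ x : ℝ, ∃ L, L ∈ Icc (0:ℝ) 1 ∧
      Tendsto (fun n => (μs n (Iic x)).toReal) (U : Filter ℕ) (𝓝 L) := by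
    intro x
    have hmem : ∀ n, (μs n (Iic x)).toReal ∈ Icc (0:ℝ) 1 :=
      fun n => ⟨ENNReal.toReal_nonneg, htR1 _ _⟩
    obtain ⟨L, hL, hle⟩ := (isCompact_Icc (a := (0:ℝ)) (b := 1)).ultrafilter_le_nhds
      (U.map fun n => (μs n (Iic x)).toReal)
      (by
        rw [Ultrafilter.coe_map, le_principal_iff, mem_map]
        exact mem_of_superset univ_mem (fun n _ => hmem n))
    refine ⟨L, hL, ?_⟩
    rwa [Ultrafilter.coe_map] at hle
  choose F hF01 hFlim using hlim
  have hFmono : Monotone F := by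
    intro x y hxy
    refine le_of_tendsto_of_tendsto' (hFlim x) (hFlim y) (fun n => ?_)
    exact ENNReal.toReal_mono (measure_ne_top _ _) (measure_mono (Iic_subset_Iic.2 hxy))
  -- Step 3: Chebyshev tails
  have hcheb : ∀ n, ∀ x : ℝ, 0 < x → (μs n {y : ℝ | x^2 ≤ y^2}).toReal ≤ M / x^2 := by
    intro n x hx
    have := mul_meas_ge_le_integral_of_nonneg (μ := μs n) (f := fun y => y^2)
      (Eventually.of_forall fun y => sq_nonneg y) (hint2 n) (x^2)
    have h2 := this.trans (hM n)
    rw [le_div_iff₀ (by positivity)]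
    rw [measureReal_def] at h2
    linarith [h2]
  have tailIic : ∀ n, ∀ x : ℝ, 0 < x → (μs n (Iic (-x))).toReal ≤ M / x^2 := by
    intro n x hx
    refine le_trans ?_ (hcheb n x hx)
    refine ENNReal.toReal_mono (measure_ne_top _ _) (measure_mono ?_)
    intro y hy
    simp only [mem_Iic] at hy
    simp only [mem_setOf_eq]
    nlinarith
  have tailIoi : ∀ n, ∀ x : ℝ, 0 < x → (μs n (Ioi x)).toReal ≤ M / x^2 := by
    intro n x hx
    refine le_trans ?_ (hcheb n x hx)
    refine ENNReal.toReal_mono (measure_ne_top _ _) (measure_mono ?_)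
    intro y hy
    simp only [mem_Ioi] at hy
    simp only [mem_setOf_eq]
    nlinarith
  -- complement identity
  have hsplitIic : ∀ (κ : Measure ℝ) [IsProbabilityMeasure κ] (x : ℝ),
      (κ (Iic x)).toReal + (κ (Ioi x)).toReal = 1 := by
    intro κ _ x
    have h1 : κ (Iic x ∪ Ioi x) = κ (Iic x) + κ (Ioi x) :=
      measure_union (Set.Iic_disjoint_Ioi le_rfl) measurableSet_Ioi
    rw [Set.Iic_union_Ioi, measure_univ] at h1
    have := ENNReal.toReal_add (measure_ne_top κ (Iic x)) (measure_ne_top κ (Ioi x))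
    rw [← h1] at this
    simpa using this.symm
  -- Step 4: F bounds
  have hFup : ∀ x : ℝ, 0 < x → F (-x) ≤ M / x^2 := fun x hx =>
    le_of_tendsto (hFlim (-x)) (Eventually.of_forall fun n => tailIic n x hx)
  have hFlow : ∀ x : ℝ, 0 < x → 1 - M / x^2 ≤ F x := by
    intro x hx
    refine ge_of_tendsto (hFlim x) (Eventually.of_forall fun n => ?_)
    have h1 := hsplitIic (μs n) x
    have h2 := tailIoi n x hx
    linarith
  -- Step 5: Stieltjes function
  set G := hFmono.stieltjesFunction with hGdef
  have hGF : ∀ x, G x = Function.rightLim F x := fun x => hFmono.stieltjesFunction_eq x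
  have hFG : ∀ x, F x ≤ G x := by
    intro x; rw [hGF]; exact hFmono.le_rightLim le_rfl
  have hGle : ∀ x y : ℝ, x < y → G x ≤ F y := by
    intro x y hxy; rw [hGF]; exact hFmono.rightLim_le hxy
  have hG0 : ∀ x, 0 ≤ G x := fun x => le_trans (hF01 x).1 (hFG x)
  have hG1 : ∀ x, G x ≤ 1 := fun x =>
    le_trans (hGle x (x+1) (by linarith)) (hF01 (x+1)).2
  -- Step 6: limits of G
  have hGbot : Tendsto (fun x => G x) atBot (𝓝 0) := by
    apply tendsto_of_tendsto_of_tendsto_of_le_of_le' (g := fun _ => (0:ℝ))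
      (h := fun x : ℝ => M / (-(x+1))) tendsto_const_nhds
    · have h1 : Tendsto (fun x : ℝ => -(x+1)) atBot atTop := by
        apply tendsto_neg_atBot_atTop.comp
        exact tendsto_atBot_add_const_right _ 1 tendsto_id
      exact Tendsto.div_atTop tendsto_const_nhds h1
    · exact Eventually.of_forall fun x => hG0 x
    · rw [eventually_atBot]
      refine ⟨-2, fun x hx => ?_⟩
      have hy : (0:ℝ) < -(x+1) := by linarith
      have hy1 : (1:ℝ) ≤ -(x+1) := by linarith
      have h1 : G x ≤ F (x+1) := hGle x (x+1) (by linarith)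
      have h2 : F (x+1) ≤ M / (-(x+1))^2 := by
        have := hFup (-(x+1)) hy
        simpa using this
      have h3 : M / (-(x+1))^2 ≤ M / (-(x+1)) :=
        div_le_div_of_nonneg_left hM0 hy (by nlinarith)
      linarith
  have hGtop : Tendsto (fun x => G x) atTop (𝓝 1) := by
    apply tendsto_of_tendsto_of_tendsto_of_le_of_le' (g := fun x : ℝ => 1 - M / x)
      (h := fun _ : ℝ => (1:ℝ))
    · have h1 : Tendsto (fun x : ℝ => M / x) atTop (𝓝 0) :=
        Tendsto.div_atTop tendsto_const_nhds tendsto_id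
      simpa using tendsto_const_nhds.sub h1
    · exact tendsto_const_nhds
    · rw [eventually_atTop]
      refine ⟨1, fun x hx => ?_⟩
      have hx0 : (0:ℝ) < x := by linarith
      have h2 : 1 - M / x^2 ≤ F x := hFlow x hx0
      have h3 : M / x ≤ M / x^2 → 1 - M/x^2 ≤ 1 - M/x := by intro h; linarith
      have h4 : M / x^2 ≤ M / x := div_le_div_of_nonneg_left hM0 hx0 (by nlinarith)
      have h5 := hFG x
      linarith
    · exact Eventually.of_forall fun x => hG1 x
  set ν := G.measure with hν
  haveI hνprob : IsProbabilityMeasure ν := G.isProbabilityMeasure hGbot hGtop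
  -- Step 7
  set D := {x : ℝ | ¬ ContinuousAt F x} with hD
  have hDcount : D.Countable := hFmono.countable_not_continuousAt
  have hGD : ∀ x : ℝ, x ∉ D → G x = F x := by
    intro x hx
    have hc : ContinuousAt F x := by simpa [hD] using hx
    rw [hGF]
    exact hFmono.continuousWithinAt_Ioi_iff_rightLim_eq.1 hc.continuousWithinAt
  -- ν interval values
  have hνIoc : ∀ a b : ℝ, a ≤ b → (ν (Ioc a b)).toReal = G b - G a := by
    intro a b hab
    rw [hν, G.measure_Ioc, ENNReal.toReal_ofReal (by linarith [hGF a, hGF b, hFmono.rightLim hab, (hGdef ▸ G.mono hab : G a ≤ G b)])]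
  -- Step 8: interval convergence
  have hconv : ∀ a b : ℝ, a ∉ D → b ∉ D → a ≤ b →
      Tendsto (fun n => ((μs n) (Ioc a b)).toReal) (U : Filter ℕ)
        (𝓝 ((ν (Ioc a b)).toReal)) := by
    intro a b haD hbD hab
    have hsum : ∀ n, ((μs n) (Ioc a b)).toReal
        = ((μs n) (Iic b)).toReal - ((μs n) (Iic a)).toReal := by
      intro n
      have h1 : (μs n) (Iic a ∪ Ioc a b) = (μs n) (Iic a) + (μs n) (Ioc a b) :=
        measure_union (Set.Iic_disjoint_Ioc le_rfl) measurableSet_Ioc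
      rw [Set.Iic_union_Ioc_eq_Iic hab] at h1
      have h2 := ENNReal.toReal_add (measure_ne_top (μs n) (Iic a))
        (measure_ne_top (μs n) (Ioc a b))
      rw [← h1] at h2
      rw [h2]; ring
    have hlim2 : Tendsto (fun n => ((μs n) (Iic b)).toReal - ((μs n) (Iic a)).toReal)
        (U : Filter ℕ) (𝓝 (F b - F a)) := (hFlim b).sub (hFlim a)
    rw [hνIoc a b hab, hGD a haD, hGD b hbD]
    simpa [hsum] using hlim2
  -- ν tail values
  have hνIic : ∀ x : ℝ, (ν (Iic x)).toReal = G x := by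
    intro x
    rw [hν, G.measure_Iic hGbot, sub_zero, ENNReal.toReal_ofReal (hG0 x)]
  have hνIoi : ∀ x : ℝ, (ν (Ioi x)).toReal = 1 - G x := by
    intro x
    have := hsplitIic ν x
    rw [hνIic x] at this
    linarith
  refine ⟨ν, hνprob, ?_⟩
  -- Step 10: weak convergence along U
  intro g
  apply tendsto_of_forall_approx
  intro ε hε
  set C := ‖g‖ with hC
  have hC0 : 0 ≤ C := norm_nonneg g
  -- choose A
  obtain ⟨A, hA1, hAM⟩ : ∃ A : ℝ, 1 ≤ A ∧ C * (M/A^2 + M/A^2) ≤ ε/2 := by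
    refine ⟨max 1 (4*(C+1)*(M+1)/ε), le_max_left _ _, ?_⟩
    set A := max 1 (4*(C+1)*(M+1)/ε) with hA
    have hA1 : 1 ≤ A := le_max_left _ _
    have hA0 : 0 < A := by linarith
    have hA2 : 4*(C+1)*(M+1)/ε ≤ A := le_max_right _ _
    have hAsq : A ≤ A^2 := by nlinarith
    have h1 : M / A^2 ≤ M / A := div_le_div_of_nonneg_left hM0 hA0 hAsq
    have h2 : M / A ≤ ε * (M+1) / (4*(C+1)*(M+1)) := by
      rw [div_le_div_iff₀ hA0 (by positivity)]
      have : 4*(C+1)*(M+1)/ε * ε = 4*(C+1)*(M+1) := by field_simp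
      nlinarith [mul_le_mul_of_nonneg_left hA2 (mul_nonneg hM0 hε.le)]
    have h3 : ε * (M+1) / (4*(C+1)*(M+1)) = ε / (4*(C+1)) := by
      rw [div_eq_div_iff (by positivity) (by positivity)]; ring
    have h4 : M / A^2 ≤ ε / (4*(C+1)) := by rw [← h3]; linarith
    have h5 : C * (M/A^2 + M/A^2) ≤ C * (2 * (ε / (4*(C+1)))) := by
      apply mul_le_mul_of_nonneg_left (by linarith) hC0
    have h6 : C * (2 * (ε / (4*(C+1)))) ≤ ε/2 := by
      have he : C * (2 * (ε / (4*(C+1)))) = (C/(C+1)) * (ε/2) := by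
        field_simp; ring
      have hr : C/(C+1) ≤ 1 := by
        rw [div_le_one (by positivity)]; linarith
      rw [he]
      calc (C/(C+1)) * (ε/2) ≤ 1 * (ε/2) :=
            mul_le_mul_of_nonneg_right hr (by positivity)
        _ = ε/2 := one_mul _
    linarith
  have hK : IsCompact (Icc (-A-1) (A+2)) := isCompact_Icc
  have hUC := hK.uniformContinuousOn_of_continuous g.continuous.continuousOn
  obtain ⟨δ, hδ0, hδ⟩ := Metric.uniformContinuousOn_iff.1 hUC (ε/2) (by linarith)
  obtain ⟨N, t, htD, htlt, ht0, htN, htmesh, htIcc⟩ := exists_grid hDcount A δ hA1 hδ0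
  have htmono : Monotone t := monotone_nat_of_le_succ (fun i => (htlt i).le)
  set S : ℕ → ℝ := fun n => ∑ i ∈ Finset.range N,
    g (t (i+1)) * ((μs n) (Ioc (t i) (t (i+1)))).toReal with hS
  set c : ℝ := ∑ i ∈ Finset.range N,
    g (t (i+1)) * ((ν (Ioc (t i) (t (i+1)))).toReal) with hc
  have hosc : ∀ i, i < N → ∀ x ∈ Ioc (t i) (t (i+1)), |g x - g (t (i+1))| ≤ ε/2 := by
    intro i hi x hx
    have h1 := (htIcc i (by omega)).1
    have h2 := (htIcc (i+1) (by omega)).2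
    have h3 := (htIcc (i+1) (by omega)).1
    have hxK : x ∈ Icc (-A-1) (A+2) := ⟨by linarith [hx.1], by linarith [hx.2]⟩
    have htK : t (i+1) ∈ Icc (-A-1) (A+2) := ⟨h3, h2⟩
    have hd : dist x (t (i+1)) < δ := by
      rw [Real.dist_eq, abs_sub_lt_iff]
      have hm := htmesh i
      constructor
      · linarith [hx.2]
      · linarith [hx.1]
    have := hδ x hxK (t (i+1)) htK hd
    rw [Real.dist_eq] at this
    exact this.le
  have hA0 : (0:ℝ) < A := by linarith
  refine ⟨S, c, ?_, ?_, ?_⟩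
  · apply tendsto_finset_sum
    intro i _
    exact (hconv (t i) (t (i+1)) (htD i) (htD (i+1)) (htlt i).le).const_mul _
  · intro n
    have hri := riemann_approx (μs n) g t htmono N (by linarith) hosc
    have hIic : ((μs n) (Iic (t 0))).toReal ≤ M / A^2 := by
      refine le_trans (ENNReal.toReal_mono (measure_ne_top _ _)
        (measure_mono (Iic_subset_Iic.2 ht0))) ?_
      simpa using tailIic n A hA0
    have hIoi : ((μs n) (Ioi (t N))).toReal ≤ M / A^2 := by
      refine le_trans (ENNReal.toReal_mono (measure_ne_top _ _)
        (measure_mono (Ioi_subset_Ioi htN))) (tailIoi n A hA0)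
    calc |∫ x, g x ∂μs n - S n|
        ≤ ε/2 + C * (((μs n) (Iic (t 0))).toReal + ((μs n) (Ioi (t N))).toReal) := hri
      _ ≤ ε/2 + C * (M/A^2 + M/A^2) :=
          add_le_add_right (mul_le_mul_of_nonneg_left (by linarith) hC0) _
      _ ≤ ε/2 + ε/2 := by linarith
      _ = ε := by ring
  · have hri := riemann_approx ν g t htmono N (by linarith) hosc
    have hIic : (ν (Iic (t 0))).toReal ≤ M / A^2 := by
      rw [hνIic, hGD (t 0) (htD 0)]
      calc F (t 0) ≤ F (-A) := hFmono ht0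
        _ ≤ M / A^2 := hFup A hA0
    have hIoi : (ν (Ioi (t N))).toReal ≤ M / A^2 := by
      rw [hνIoi]
      have h1 : 1 - M / A^2 ≤ F A := hFlow A hA0
      have h2 : F A ≤ F (t N) := hFmono htN
      have h3 := hFG (t N)
      linarith
    calc |∫ x, g x ∂ν - c|
        ≤ ε/2 + C * ((ν (Iic (t 0))).toReal + (ν (Ioi (t N))).toReal) := hri
      _ ≤ ε/2 + C * (M/A^2 + M/A^2) :=
          add_le_add_right (mul_le_mul_of_nonneg_left (by linarith) hC0) _
      _ ≤ ε/2 + ε/2 := by linarith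
      _ = ε := by ring

lemma exists_bcf (f : ℝ → ℝ) (hf : Continuous f) (C : ℝ) (h : ∀ x, |f x| ≤ C) :
    ∃ g : BoundedContinuousFunction ℝ ℝ, ∀ x, g x = f x := by
  refine ⟨BoundedContinuousFunction.ofNormedAddCommGroup f hf C
    (fun x => by simpa [Real.norm_eq_abs] using h x), fun x => rfl⟩

/-- If all polynomials are integrable w.r.t. the probability measures
`μ_n` and `μ`, the integrals of every polynomial converge, and `μ` is characterized by
its moments, then `μ_n` converges weakly to `μ`. -/
theorem stmt4 (μs : ℕ → Measure ℝ) (μ : Measure ℝ)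
    [∀ n, IsProbabilityMeasure (μs n)] [IsProbabilityMeasure μ]
    (hint_n : ∀ n, ∀ p : Polynomial ℝ, Integrable (fun x => p.eval x) (μs n))
    (hint : ∀ p : Polynomial ℝ, Integrable (fun x => p.eval x) μ)
    (h1 : ∀ p : Polynomial ℝ,
      Tendsto (fun n => ∫ x, p.eval x ∂ μs n) atTop (nhds (∫ x, p.eval x ∂μ)))
    (h2 : ∀ ν : Measure ℝ, IsProbabilityMeasure ν →
      (∀ p : Polynomial ℝ, Integrable (fun x => p.eval x) ν) →
      (∀ k : ℕ, ∫ x, x ^ k ∂ν = ∫ x, x ^ k ∂μ) → ν = μ) :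
    ∀ f : BoundedContinuousFunction ℝ ℝ,
      Tendsto (fun n => ∫ x, f x ∂ μs n) atTop (nhds (∫ x, f x ∂μ)) := by
  intro f
  rw [tendsto_iff_ultrafilter]
  intro U hU
  -- monomial facts
  have hXk : ∀ k : ℕ, (fun x : ℝ => Polynomial.eval x (Polynomial.X ^ k))
      = fun x : ℝ => x ^ k := by
    intro k; funext x; simp
  have hpow_n : ∀ n (k : ℕ), Integrable (fun x => x^k) (μs n) := by
    intro n k
    have := hint_n n (Polynomial.X ^ k)
    rwa [hXk k] at this
  have h1' : ∀ k : ℕ, Tendsto (fun n => ∫ x, x^k ∂(μs n)) atTop (𝓝 (∫ x, x^k ∂μ)) := by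
    intro k
    have := h1 (Polynomial.X ^ k)
    rwa [hXk k] at this
  have hMex : ∀ k : ℕ, ∃ Mk : ℝ, 0 ≤ Mk ∧ ∀ n, ∫ x, x^k ∂(μs n) ≤ Mk := by
    intro k
    obtain ⟨B, hB⟩ := (h1' k).bddAbove_range
    exact ⟨max B 0, le_max_right _ _,
      fun n => le_trans (hB (Set.mem_range_self n)) (le_max_left _ _)⟩
  choose Mb hMb0 hMb using hMex
  obtain ⟨ν, hνprob, hνconv⟩ := key_ultra μs U (hMb0 2) (hMb 2) (fun n => hpow_n n 2)
  -- even moments of ν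
  have hν_even : ∀ k : ℕ, Integrable (fun x => x^(2*k)) ν ∧
      ∫ x, x^(2*k) ∂ν ≤ Mb (2*k) := by
    intro k
    have hnn : ∀ x : ℝ, (0:ℝ) ≤ x^(2*k) := by
      intro x; rw [pow_mul]; exact pow_nonneg (sq_nonneg x) k
    have hBterm : ∀ B : ℕ, ∫⁻ x, ENNReal.ofReal (min (x^(2*k)) B) ∂ν
        ≤ ENNReal.ofReal (Mb (2*k)) := by
      intro B
      obtain ⟨g, hg⟩ := exists_bcf (fun x => min (x^(2*k)) (B:ℝ))
        ((continuous_pow _).min continuous_const) B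
        (fun x => abs_le.2 ⟨by
            have := hnn x
            have : (0:ℝ) ≤ min (x^(2*k)) B := le_min this (Nat.cast_nonneg B)
            linarith, min_le_right _ _⟩)
      have hgfun : (fun x : ℝ => g x) = fun x => min (x^(2*k)) (B:ℝ) := funext hg
      have hgintν : Integrable (fun x => min (x^(2*k)) (B:ℝ)) ν := by
        rw [← hgfun]; exact g.integrable ν
      have hlimg := hνconv g
      have hgle : ∫ x, g x ∂ν ≤ Mb (2*k) := by
        refine le_of_tendsto hlimg (Eventually.of_forall fun n => ?_)
        have : ∫ x, g x ∂(μs n) = ∫ x, min (x^(2*k)) (B:ℝ) ∂(μs n) := by rw [hgfun]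
        rw [this]
        refine le_trans (integral_mono (by rw [← hgfun]; exact g.integrable _)
          (hpow_n n (2*k)) (fun x => min_le_left _ _)) (hMb (2*k) n)
      rw [← ofReal_integral_eq_lintegral_ofReal hgintν
        (Eventually.of_forall fun x => le_min (hnn x) (Nat.cast_nonneg B))]
      apply ENNReal.ofReal_le_ofReal
      calc ∫ x, min (x^(2*k)) (B:ℝ) ∂ν = ∫ x, g x ∂ν := by rw [hgfun]
        _ ≤ Mb (2*k) := hgle
    have hmct : ∫⁻ x, ENNReal.ofReal (x^(2*k)) ∂ν
        = ⨆ B : ℕ, ∫⁻ x, ENNReal.ofReal (min (x^(2*k)) B) ∂ν := by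
      rw [← lintegral_iSup]
      · congr 1; funext x
        apply le_antisymm
        · refine le_trans (le_of_eq ?_) (le_iSup
            (fun B : ℕ => ENNReal.ofReal (min (x^(2*k)) (B:ℝ))) ⌈x^(2*k)⌉₊)
          rw [min_eq_left (Nat.le_ceil _)]
        · exact iSup_le fun B => ENNReal.ofReal_le_ofReal (min_le_left _ _)
      · intro B
        exact ((continuous_pow _).min continuous_const).measurable.ennreal_ofReal
      · intro B1 B2 hB x
        exact ENNReal.ofReal_le_ofReal (min_le_min le_rfl (Nat.cast_le.2 hB))
    have hL : ∫⁻ x, ENNReal.ofReal (x^(2*k)) ∂ν ≤ ENNReal.ofReal (Mb (2*k)) := by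
      rw [hmct]; exact iSup_le hBterm
    have hint2k : Integrable (fun x => x^(2*k)) ν := by
      refine ⟨(continuous_pow _).aestronglyMeasurable, ?_⟩
      rw [hasFiniteIntegral_iff_ofReal (Eventually.of_forall hnn)]
      exact lt_of_le_of_lt hL ENNReal.ofReal_lt_top
    refine ⟨hint2k, ?_⟩
    rw [integral_eq_lintegral_of_nonneg_ae (Eventually.of_forall hnn)
      (continuous_pow _).aestronglyMeasurable]
    exact ENNReal.toReal_le_of_le_ofReal (hMb0 (2*k)) hL
  -- all monomials integrable w.r.t. ν
  have hν_pow : ∀ k : ℕ, Integrable (fun x => x^k) ν := by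
    intro k
    refine Integrable.mono ((integrable_const (1:ℝ)).add (hν_even k).1)
      (continuous_pow k).aestronglyMeasurable (Eventually.of_forall fun x => ?_)
    have h1x : |x^k| ≤ 1 + x^(2*k) := by
      have he : x^(2*k) = |x^k|^2 := by
        rw [mul_comm, pow_mul, ← sq_abs]
      nlinarith [abs_nonneg (x^k), sq_nonneg (|x^k| - 1)]
    have h2x : (0:ℝ) ≤ 1 + x^(2*k) := by
      have := (hν_even k).1
      nlinarith [abs_nonneg (x^k)]
    calc ‖x^k‖ = |x^k| := rfl
      _ ≤ 1 + x^(2*k) := h1x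
      _ = ‖1 + x^(2*k)‖ := (Real.norm_of_nonneg h2x).symm
  have hν_poly : ∀ p : Polynomial ℝ, Integrable (fun x => p.eval x) ν := by
    intro p
    have he : (fun x : ℝ => p.eval x)
        = fun x => ∑ i ∈ Finset.range (p.natDegree + 1), p.coeff i * x^i :=
      funext fun x => Polynomial.eval_eq_sum_range x
    rw [he]
    exact integrable_finset_sum _ fun i _ => (hν_pow i).const_mul _
  -- moments agree
  have hmom : ∀ k : ℕ, ∫ x, x^k ∂ν = ∫ x, x^k ∂μ := by
    intro k
    rcases Nat.eq_zero_or_pos k with hk0 | hk1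
    · subst hk0; simp
    have hnn2k : ∀ x : ℝ, (0:ℝ) ≤ x^(2*k) := by
      intro x; rw [pow_mul]; exact pow_nonneg (sq_nonneg x) k
    have hkey : ∀ A : ℕ, 1 ≤ A → |∫ x, x^k ∂ν - ∫ x, x^k ∂μ| ≤ 4*(Mb (2*k))/A := by
      intro A hA
      set a : ℝ := (A : ℝ) with ha
      have ha1 : (1:ℝ) ≤ a := ha ▸ Nat.one_le_cast.2 hA
      have ha0 : (0:ℝ) < a := by linarith
      have hak : (0:ℝ) < a^k := by positivity
      have hbnd : ∀ x : ℝ, |(max (-a) (min x a))^k| ≤ a^k := by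
        intro x
        have hy : |max (-a) (min x a)| ≤ a := abs_le.2
          ⟨le_max_left _ _, max_le (by linarith) (min_le_right x a)⟩
        rw [abs_pow]
        exact pow_le_pow_left₀ (abs_nonneg _) hy k
      obtain ⟨g, hg⟩ := exists_bcf (fun x => (max (-a) (min x a))^k)
        ((continuous_const.max (continuous_id.min continuous_const)).pow k) (a^k) hbnd
      have hpt : ∀ x : ℝ, |x^k - g x| ≤ 2*(x^(2*k)/a^k) := by
        intro x
        rw [hg]
        rcases le_or_gt (|x|) a with hxa | hxa
        · have hclamp : max (-a) (min x a) = x := by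
            rcases abs_le.1 hxa with ⟨hl, hr⟩
            rw [min_eq_left hr, max_eq_right hl]
          rw [hclamp, sub_self, abs_zero]
          have := hnn2k x
          positivity
        · have h1 : a^k ≤ |x|^k := pow_le_pow_left₀ ha0.le hxa.le k
          have hx2k : x^(2*k) = |x|^k * |x|^k := by
            rw [← abs_of_nonneg (hnn2k x), abs_pow, two_mul, pow_add]
          have h2 : |x|^k ≤ x^(2*k)/a^k := by
            rw [le_div_iff₀ hak, hx2k]
            exact mul_le_mul_of_nonneg_left h1 (pow_nonneg (abs_nonneg x) k)
          have tri : |x^k - (max (-a) (min x a))^k|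
              ≤ |x^k| + |(max (-a) (min x a))^k| := by
            rw [sub_eq_add_neg]
            exact (abs_add_le _ _).trans (by rw [abs_neg])
          have hxk : |x^k| = |x|^k := abs_pow x k
          have := hbnd x
          linarith
      have hbound : ∀ (κ : Measure ℝ), IsProbabilityMeasure κ →
          Integrable (fun x => x^k) κ → Integrable (fun x => x^(2*k)) κ →
          (∫ x, x^(2*k) ∂κ ≤ Mb (2*k)) →
          |(∫ x, x^k ∂κ) - ∫ x, g x ∂κ| ≤ 2*(Mb (2*k)/a^k) := by
        intro κ hκ hik hi2k h2k
        haveI := hκ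
        have hgi : Integrable (fun x => g x) κ := g.integrable κ
        have hfe : (fun x : ℝ => 2*(x^(2*k)/a^k)) = fun x => (2/a^k) * x^(2*k) :=
          funext fun x => by ring
        rw [← integral_sub hik hgi]
        calc |∫ x, (x^k - g x) ∂κ| ≤ ∫ x, |x^k - g x| ∂κ := by
              simpa [Real.norm_eq_abs] using
                norm_integral_le_integral_norm (μ := κ) (fun x => x^k - g x)
          _ ≤ ∫ x, 2*(x^(2*k)/a^k) ∂κ := by
              refine integral_mono (hik.sub hgi).abs ?_ hpt
              rw [hfe]
              exact hi2k.const_mul _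
          _ = (2/a^k) * ∫ x, x^(2*k) ∂κ := by rw [hfe, integral_const_mul]
          _ ≤ (2/a^k) * Mb (2*k) := mul_le_mul_of_nonneg_left h2k (by positivity)
          _ = 2*(Mb (2*k)/a^k) := by ring
      have hgk := hνconv g
      have hxkU : Tendsto (fun n => ∫ x, x^k ∂(μs n)) (U : Filter ℕ)
          (𝓝 (∫ x, x^k ∂μ)) := (h1' k).mono_left hU
      have h3 : |(∫ x, x^k ∂μ) - ∫ x, g x ∂ν| ≤ 2*(Mb (2*k)/a^k) :=
        le_of_tendsto (hxkU.sub hgk).abs (Eventually.of_forall fun n =>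
          hbound (μs n) inferInstance (hpow_n n k) (hpow_n n (2*k)) (hMb (2*k) n))
      have h4 := hbound ν hνprob (hν_pow k) (hν_even k).1 (hν_even k).2
      have h5 : |∫ x, x^k ∂ν - ∫ x, x^k ∂μ| ≤ 4*(Mb (2*k))/a^k := by
        have tri2 : |∫ x, x^k ∂ν - ∫ x, x^k ∂μ|
            ≤ |(∫ x, x^k ∂ν) - ∫ x, g x ∂ν| + |(∫ x, x^k ∂μ) - ∫ x, g x ∂ν| := by
          have e : (∫ x, x^k ∂ν) - ∫ x, x^k ∂μ
              = ((∫ x, x^k ∂ν) - ∫ x, g x ∂ν) - ((∫ x, x^k ∂μ) - ∫ x, g x ∂ν) := by ring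
          rw [e, sub_eq_add_neg]
          exact (abs_add_le _ _).trans (by rw [abs_neg])
        calc |∫ x, x^k ∂ν - ∫ x, x^k ∂μ|
            ≤ |(∫ x, x^k ∂ν) - ∫ x, g x ∂ν| + |(∫ x, x^k ∂μ) - ∫ x, g x ∂ν| := tri2
          _ ≤ 2*(Mb (2*k)/a^k) + 2*(Mb (2*k)/a^k) := add_le_add h4 h3
          _ = 4*(Mb (2*k))/a^k := by ring
      refine h5.trans ?_
      exact div_le_div_of_nonneg_left (by linarith [hMb0 (2*k)]) ha0
        (le_self_pow₀ ha1 hk1.ne')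
    have hlim0 : Tendsto (fun A : ℕ => 4*(Mb (2*k))/A) atTop (𝓝 0) :=
      tendsto_const_div_atTop_nhds_zero_nat _
    have habs : |∫ x, x^k ∂ν - ∫ x, x^k ∂μ| ≤ 0 :=
      ge_of_tendsto hlim0 (eventually_atTop.2 ⟨1, fun A hA => hkey A hA⟩)
    have h0 := abs_nonneg (∫ x, x^k ∂ν - ∫ x, x^k ∂μ)
    have : |∫ x, x^k ∂ν - ∫ x, x^k ∂μ| = 0 := le_antisymm habs h0
    have := abs_eq_zero.1 this
    linarith
  have hνμ : ν = μ := h2 ν hνprob hν_poly hmom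
  have := hνconv f
  rwa [hνμ] at this
end

section
/- Let V be a countable type and L : V → V → ℂ a function satisfying the self-involutive condition L(u, v) = conj(L(v, u)) for all u, v ∈ V, and suppose there is a constant C such that for every u ∈ V the family (L(u, v))_{v ∈ V} is summable with ∑_v |L(u, v)| ≤ C. Then there exists a bounded linear operator M : ℓ²(V; ℂ) → ℓ²(V; ℂ) which is self-adjoint and satisfies ⟨M δ_x, δ_y⟩ = L(x, y) for all x, y ∈ V, where δ_x denotes the standard basis vector of ℓ²(V; ℂ) supported at x. (This is the Markov-type operator M(f)(u) = ∑_{w} L(w, u) f(w) associated to a self-involutive labelled graph with uniformly ℓ¹-bounded labelled degrees.) -/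
open MeasureTheory
open scoped ENNReal NNReal

private lemma cs_tsum {ι : Type*} {a b : ι → ℝ} (ha : ∀ i, 0 ≤ a i) (hb : ∀ i, 0 ≤ b i)
    (hA : Summable fun i => a i ^ 2) (hB : Summable fun i => b i ^ 2) :
    (∑' i, a i * b i) ^ 2 ≤ (∑' i, a i ^ 2) * ∑' i, b i ^ 2 := by
  have hab : Summable fun i => a i * b i := by
    refine Summable.of_nonneg_of_le (fun i => mul_nonneg (ha i) (hb i))
      (fun i => ?_) ((hA.add hB).div_const 2)
    nlinarith [sq_nonneg (a i - b i)]
  have hXY : 0 ≤ (∑' i, a i ^ 2) * ∑' i, b i ^ 2 :=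
    mul_nonneg (tsum_nonneg fun i => sq_nonneg _) (tsum_nonneg fun i => sq_nonneg _)
  have key : ∑' i, a i * b i ≤ Real.sqrt ((∑' i, a i ^ 2) * ∑' i, b i ^ 2) := by
    refine Summable.tsum_le_of_sum_le hab fun s => ?_
    rw [Real.le_sqrt (Finset.sum_nonneg fun i _ => mul_nonneg (ha i) (hb i))]
    calc (∑ i ∈ s, a i * b i) ^ 2 ≤ (∑ i ∈ s, a i ^ 2) * ∑ i ∈ s, b i ^ 2 :=
          Finset.sum_mul_sq_le_sq_mul_sq s a b
      _ ≤ (∑' i, a i ^ 2) * ∑' i, b i ^ 2 := by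
          refine mul_le_mul (Summable.sum_le_tsum s (fun i _ => sq_nonneg _) hA)
            (Summable.sum_le_tsum s (fun i _ => sq_nonneg _) hB)
            (Finset.sum_nonneg fun i _ => sq_nonneg _) (tsum_nonneg fun i => sq_nonneg _)
    exact hXY
  calc (∑' i, a i * b i) ^ 2 ≤ Real.sqrt ((∑' i, a i ^ 2) * ∑' i, b i ^ 2) ^ 2 :=
        pow_le_pow_left₀ (tsum_nonneg fun i => mul_nonneg (ha i) (hb i)) key 2
    _ = _ := Real.sq_sqrt hXY

/-- A self-involutive label function `L : V → V → ℂ` with uniformly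
`ℓ¹`-bounded rows defines a bounded self-adjoint Markov-type operator `M` on `ℓ²(V; ℂ)`
with `⟨M δ_x, δ_y⟩ = L x y` (inner products here in the mathematical convention:
`⟨f, g⟩ = ∑ f x * conj (g x)`, so `⟨M δ_x, δ_y⟩` is written `inner δ_y (M δ_x)`). -/
theorem stmt8 {V : Type*} [Countable V] [DecidableEq V] (L : V → V → ℂ)
    (hL : ∀ u v : V, L u v = starRingEnd ℂ (L v u))
    (C : ℝ)
    (hsum : ∀ u : V, Summable fun v => ‖L u v‖)
    (hbd : ∀ u : V, (∑' v, ‖L u v‖) ≤ C) :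
    ∃ M : lp (fun _ : V => ℂ) 2 →L[ℂ] lp (fun _ : V => ℂ) 2,
      (∀ f g : lp (fun _ : V => ℂ) 2, (inner ℂ (M f) g : ℂ) = inner ℂ f (M g)) ∧
      ∀ x y : V, (inner ℂ (lp.single 2 y (1 : ℂ)) (M (lp.single 2 x (1 : ℂ))) : ℂ) = L x y := by
  classical
  rcases isEmpty_or_nonempty V with hV | hV
  · exact ⟨0, fun f g => by simp, fun x => isEmptyElim x⟩
  have hC0 : 0 ≤ C :=
    le_trans (tsum_nonneg fun v => norm_nonneg _) (hbd (Classical.arbitrary V))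
  have htr : (0:ℝ) < (2 : ℝ≥0∞).toReal := by norm_num
  have hnorm : ∀ u v, ‖L u v‖ = ‖L v u‖ := fun u v => by
    rw [hL u v]; exact RCLike.norm_conj _
  have hsumc : ∀ u : V, Summable fun w => ‖L w u‖ := fun u =>
    (hsum u).congr fun w => hnorm u w
  have hbdc : ∀ u : V, (∑' w, ‖L w u‖) ≤ C := fun u => by
    rw [tsum_congr fun w => hnorm w u]; exact hbd u
  -- squares of lp functions are summable
  have hfsq : ∀ f : lp (fun _ : V => ℂ) 2, Summable fun w => ‖f w‖ ^ 2 := fun f => by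
    have h := (lp.memℓp f).summable htr
    have : ((2 : ℝ≥0∞).toReal : ℝ) = ((2:ℕ):ℝ) := by norm_num
    simpa [this, Real.rpow_natCast] using h
  have hnormsq : ∀ f : lp (fun _ : V => ℂ) 2, ‖f‖ ^ 2 = ∑' w, ‖f w‖ ^ 2 := fun f => by
    have h := lp.norm_rpow_eq_tsum htr f
    have h2 : ((2 : ℝ≥0∞).toReal : ℝ) = ((2:ℕ):ℝ) := by norm_num
    simpa [h2, Real.rpow_natCast] using h
  -- pointwise summability
  have hsummand : ∀ (f : lp (fun _ : V => ℂ) 2) (u : V),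
      Summable fun w => ‖L w u‖ * ‖f w‖ := fun f u => by
    refine Summable.of_nonneg_of_le (fun w => mul_nonneg (norm_nonneg _) (norm_nonneg _))
      (fun w => mul_le_mul_of_nonneg_left
        (lp.norm_apply_le_norm (by norm_num) f w) (norm_nonneg _))
      ((hsumc u).mul_right ‖f‖)
  have hT : ∀ (f : lp (fun _ : V => ℂ) 2) (u : V),
      Summable fun w => L w u * f w := fun f u =>
    Summable.of_norm (((hsummand f u)).congr fun w => (norm_mul _ _).symm)
  set T0 : lp (fun _ : V => ℂ) 2 → V → ℂ := fun f u => ∑' w, L w u * f w with hT0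
  set g0 : lp (fun _ : V => ℂ) 2 → V → ℝ := fun f u => ∑' w, ‖L w u‖ * ‖f w‖ ^ 2 with hg0
  have hgsummand : ∀ (f : lp (fun _ : V => ℂ) 2) (u : V),
      Summable fun w => ‖L w u‖ * ‖f w‖ ^ 2 := fun f u => by
    refine Summable.of_nonneg_of_le (fun w => mul_nonneg (norm_nonneg _) (sq_nonneg _))
      (fun w => mul_le_mul_of_nonneg_left
        (pow_le_pow_left₀ (norm_nonneg _) (lp.norm_apply_le_norm (by norm_num) f w) 2)
        (norm_nonneg _))
      ((hsumc u).mul_right (‖f‖ ^ 2))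
  have hgnonneg : ∀ f u, 0 ≤ g0 f u := fun f u =>
    tsum_nonneg fun w => mul_nonneg (norm_nonneg _) (sq_nonneg _)
  -- product summability (Schur/Fubini)
  have hQ : ∀ f : lp (fun _ : V => ℂ) 2,
      Summable fun p : V × V => ‖L p.1 p.2‖ * ‖f p.1‖ ^ 2 := fun f => by
    refine (summable_prod_of_nonneg
      (f := fun p : V × V => ‖L p.1 p.2‖ * ‖f p.1‖ ^ 2)
      (fun p => mul_nonneg (norm_nonneg _) (sq_nonneg _))).mpr ⟨?_, ?_⟩
    · exact fun w => (hsum w).mul_right (‖f w‖ ^ 2)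
    · refine Summable.of_nonneg_of_le
        (fun w => tsum_nonneg fun u => mul_nonneg (norm_nonneg _) (sq_nonneg _))
        (fun w => ?_) ((hfsq f).mul_left C)
      dsimp only
      rw [tsum_mul_right]
      exact mul_le_mul_of_nonneg_right (hbd w) (sq_nonneg _)
  have hP : ∀ f : lp (fun _ : V => ℂ) 2,
      Summable fun p : V × V => ‖L p.2 p.1‖ * ‖f p.2‖ ^ 2 := fun f =>
    (hQ f).prod_symm
  have hg : ∀ f : lp (fun _ : V => ℂ) 2, Summable (g0 f) := fun f => (hP f).prod
  have hgtot : ∀ f : lp (fun _ : V => ℂ) 2, ∑' u, g0 f u ≤ C * ‖f‖ ^ 2 := fun f => by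
    have e1 : ∑' u, g0 f u = ∑' p : V × V, ‖L p.2 p.1‖ * ‖f p.2‖ ^ 2 :=
      (Summable.tsum_prod (hP f)).symm
    have e2 : (∑' p : V × V, ‖L p.2 p.1‖ * ‖f p.2‖ ^ 2)
        = ∑' p : V × V, ‖L p.1 p.2‖ * ‖f p.1‖ ^ 2 :=
      ((Equiv.prodComm V V).tsum_eq _).symm
    have e3 : (∑' p : V × V, ‖L p.1 p.2‖ * ‖f p.1‖ ^ 2)
        = ∑' w, ∑' u, ‖L w u‖ * ‖f w‖ ^ 2 := Summable.tsum_prod (hQ f)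
    rw [e1, e2, e3]
    calc (∑' w, ∑' u, ‖L w u‖ * ‖f w‖ ^ 2)
        ≤ ∑' w, C * ‖f w‖ ^ 2 := by
          refine Summable.tsum_le_tsum (fun w => ?_) ((hQ f).prod) ((hfsq f).mul_left C)
          rw [tsum_mul_right]
          exact mul_le_mul_of_nonneg_right (hbd w) (sq_nonneg _)
      _ = C * ‖f‖ ^ 2 := by rw [tsum_mul_left, hnormsq f]
  -- pointwise Cauchy-Schwarz
  have hcs : ∀ (f : lp (fun _ : V => ℂ) 2) (u : V),
      ‖T0 f u‖ ^ 2 ≤ C * g0 f u := fun f u => by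
    have h1 : ‖T0 f u‖ ≤ ∑' w, ‖L w u‖ * ‖f w‖ := by
      refine le_trans (norm_tsum_le_tsum_norm
        ((hsummand f u).congr fun w => (norm_mul _ _).symm)) ?_
      exact le_of_eq (tsum_congr fun w => norm_mul _ _)
    have h2 : (∑' w, ‖L w u‖ * ‖f w‖) ^ 2 ≤ (∑' w, ‖L w u‖) * g0 f u := by
      have := cs_tsum (a := fun w => Real.sqrt ‖L w u‖)
        (b := fun w => Real.sqrt ‖L w u‖ * ‖f w‖)
        (fun w => Real.sqrt_nonneg _)
        (fun w => mul_nonneg (Real.sqrt_nonneg _) (norm_nonneg _))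
        (by simpa [Real.sq_sqrt (norm_nonneg _)] using hsumc u)
        (by simpa [mul_pow, Real.sq_sqrt (norm_nonneg _)] using hgsummand f u)
      simpa [mul_pow, Real.sq_sqrt (norm_nonneg (L _ u)),
        ← mul_assoc, Real.mul_self_sqrt (norm_nonneg (L _ u))] using this
    have h3 : (∑' w, ‖L w u‖) * g0 f u ≤ C * g0 f u :=
      mul_le_mul_of_nonneg_right (hbdc u) (hgnonneg f u)
    calc ‖T0 f u‖ ^ 2 ≤ (∑' w, ‖L w u‖ * ‖f w‖) ^ 2 :=
          pow_le_pow_left₀ (norm_nonneg _) h1 2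
      _ ≤ (∑' w, ‖L w u‖) * g0 f u := h2
      _ ≤ C * g0 f u := h3
  have hTsq : ∀ f : lp (fun _ : V => ℂ) 2, Summable fun u => ‖T0 f u‖ ^ 2 := fun f =>
    Summable.of_nonneg_of_le (fun u => sq_nonneg _) (fun u => hcs f u) ((hg f).mul_left C)
  have hmem : ∀ f : lp (fun _ : V => ℂ) 2, Memℓp (T0 f) 2 := fun f => by
    apply memℓp_gen
    have h2 : ((2 : ℝ≥0∞).toReal : ℝ) = ((2:ℕ):ℝ) := by norm_num
    simpa [h2, Real.rpow_natCast] using hTsq f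
  have hTtot : ∀ f : lp (fun _ : V => ℂ) 2,
      ∑' u, ‖T0 f u‖ ^ 2 ≤ (C * ‖f‖) ^ 2 := fun f => by
    calc (∑' u, ‖T0 f u‖ ^ 2) ≤ ∑' u, C * g0 f u :=
          Summable.tsum_le_tsum (hcs f) (hTsq f) ((hg f).mul_left C)
      _ = C * ∑' u, g0 f u := tsum_mul_left
      _ ≤ C * (C * ‖f‖ ^ 2) := mul_le_mul_of_nonneg_left (hgtot f) hC0
      _ = (C * ‖f‖) ^ 2 := by ring
  -- the linear map
  let Tlin : lp (fun _ : V => ℂ) 2 →ₗ[ℂ] lp (fun _ : V => ℂ) 2 :=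
    { toFun := fun f => ⟨T0 f, hmem f⟩
      map_add' := fun f g => by
        apply lp.ext
        funext u
        show T0 (f + g) u = T0 f u + T0 g u
        simp only [hT0]
        rw [← Summable.tsum_add (hT f u) (hT g u)]
        refine tsum_congr fun w => ?_
        rw [lp.coeFn_add, Pi.add_apply, mul_add]
      map_smul' := fun c f => by
        apply lp.ext
        funext u
        show T0 (c • f) u = c * T0 f u
        simp only [hT0]
        rw [← tsum_mul_left]
        refine tsum_congr fun w => ?_
        rw [lp.coeFn_smul, Pi.smul_apply, smul_eq_mul]
        ring }
  have hTlin_apply : ∀ (f : lp (fun _ : V => ℂ) 2) (u : V), (Tlin f) u = T0 f u :=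
    fun f u => rfl
  have hbound : ∀ f : lp (fun _ : V => ℂ) 2, ‖Tlin f‖ ≤ C * ‖f‖ := fun f => by
    refine lp.norm_le_of_tsum_le htr (mul_nonneg hC0 (norm_nonneg f)) ?_
    have h2 : ((2 : ℝ≥0∞).toReal : ℝ) = ((2:ℕ):ℝ) := by norm_num
    calc (∑' u, ‖(Tlin f) u‖ ^ (2 : ℝ≥0∞).toReal)
        = ∑' u, ‖T0 f u‖ ^ 2 := by
          refine tsum_congr fun u => ?_
          rw [hTlin_apply, h2, Real.rpow_natCast]
      _ ≤ (C * ‖f‖) ^ 2 := hTtot f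
      _ = (C * ‖f‖) ^ (2 : ℝ≥0∞).toReal := by rw [h2, Real.rpow_natCast]
  refine ⟨Tlin.mkContinuous (C) hbound, ?_, ?_⟩
  · -- self-adjointness
    intro f g
    show (inner ℂ (Tlin f) g : ℂ) = inner ℂ f (Tlin g)
    set F : V × V → ℂ :=
      fun p => L p.1 p.2 * (starRingEnd ℂ) (f p.2) * g p.1 with hF
    have S1 : Summable fun p : V × V => ‖L p.1 p.2‖ * ‖f p.2‖ ^ 2 :=
      (hP f).congr fun p => by rw [hnorm p.2 p.1]
    have S2 : Summable fun p : V × V => ‖L p.1 p.2‖ * ‖g p.1‖ ^ 2 := hQ g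
    have hFsum : Summable F := by
      refine Summable.of_norm (Summable.of_nonneg_of_le (fun p => norm_nonneg _)
        (fun p => ?_) (((S1.add S2).div_const 2)))
      rw [hF]
      dsimp only
      rw [norm_mul, norm_mul, RCLike.norm_conj]
      have h1 : ‖f p.2‖ * ‖g p.1‖ ≤ (‖f p.2‖ ^ 2 + ‖g p.1‖ ^ 2) / 2 := by
        nlinarith [sq_nonneg (‖f p.2‖ - ‖g p.1‖)]
      have h2 : ‖L p.1 p.2‖ * ‖f p.2‖ * ‖g p.1‖
          ≤ ‖L p.1 p.2‖ * ((‖f p.2‖ ^ 2 + ‖g p.1‖ ^ 2) / 2) := by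
        rw [mul_assoc]
        exact mul_le_mul_of_nonneg_left h1 (norm_nonneg _)
      calc ‖L p.1 p.2‖ * ‖f p.2‖ * ‖g p.1‖
          ≤ ‖L p.1 p.2‖ * ((‖f p.2‖ ^ 2 + ‖g p.1‖ ^ 2) / 2) := h2
        _ = (‖L p.1 p.2‖ * ‖f p.2‖ ^ 2 + ‖L p.1 p.2‖ * ‖g p.1‖ ^ 2) / 2 := by ring
    have hcomm : ∑' u, ∑' w, F (u, w) = ∑' w, ∑' u, F (u, w) :=
      (Summable.tsum_comm (f := fun u w => F (u, w)) hFsum).symm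
    have hLHS : (inner ℂ (Tlin f) g : ℂ) = ∑' u, ∑' w, F (u, w) := by
      rw [lp.inner_eq_tsum]
      refine tsum_congr fun u => ?_
      rw [RCLike.inner_apply', hTlin_apply]
      have hconj : (starRingEnd ℂ) (T0 f u) = ∑' w, L u w * (starRingEnd ℂ) (f w) := by
        rw [hT0]
        dsimp only
        rw [starRingEnd_apply, tsum_star]
        refine tsum_congr fun w => ?_
        rw [star_mul', ← starRingEnd_apply, ← starRingEnd_apply, ← hL u w]
      rw [hconj, ← tsum_mul_right]
    have hRHS : (inner ℂ f (Tlin g) : ℂ) = ∑' w, ∑' u, F (u, w) := by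
      rw [lp.inner_eq_tsum]
      refine tsum_congr fun w => ?_
      rw [RCLike.inner_apply', hTlin_apply, hT0]
      dsimp only
      rw [← tsum_mul_left]
      refine tsum_congr fun u => ?_
      rw [hF]
      ring
    rw [hLHS, hcomm, ← hRHS]
  · -- matrix entries
    intro x y
    have hMx : ∀ u, (Tlin (lp.single 2 x (1:ℂ))) u = L x u := fun u => by
      rw [hTlin_apply]
      show (∑' w, L w u * (lp.single 2 x (1:ℂ) : lp (fun _ : V => ℂ) 2) w) = L x u
      rw [tsum_eq_single x]
      · rw [lp.single_apply_self, mul_one]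
      · intro w hw
        rw [lp.single_apply_ne 2 x _ hw, mul_zero]
    show (inner ℂ (lp.single 2 y (1:ℂ)) (Tlin (lp.single 2 x (1:ℂ))) : ℂ) = L x y
    rw [lp.inner_single_left]
    rw [hMx y]
    simp [RCLike.inner_apply']
end

section
/- Let G be a group with a nested sequence of normal subgroups K_n (K_{n+1} ⊆ K_n, each normal in G) with ⋂_n K_n = {1}, let π_n : ℂ[G] → ℂ[G/K_n] be the induced ring homomorphism of complex group algebras, and let z ∈ ℂ[G]. Then for every k ∈ ℕ there exists N ∈ ℕ such that for all n ≥ N, the coefficient of the identity element of G/K_n in (π_n z)^k equals the coefficient of the identity element of G in z^k. -/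
/-- For nested normal subgroups `K_n` with trivial intersection and
`z ∈ ℂ[G]`, for every `k` the identity coefficient of `(π_n z) ^ k` in `ℂ[G/K_n]`
eventually equals the identity coefficient of `z ^ k`. -/
theorem stmt12 {G : Type*} [Group G] (K : ℕ → Subgroup G) [∀ n, (K n).Normal]
    (hnested : ∀ n, K (n + 1) ≤ K n) (htriv : (⨅ n, K n) = ⊥)
    (z : MonoidAlgebra ℂ G) :
    ∀ k : ℕ, ∃ N : ℕ, ∀ n ≥ N,
      ((MonoidAlgebra.mapDomainRingHom ℂ (QuotientGroup.mk' (K n)) z) ^ k).coeff 1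
        = (z ^ k).coeff 1 := by
  intro k
  classical
  set u := z ^ k with hu
  have anti : Antitone K := antitone_nat_of_succ_le hnested
  let f : G → ℕ := fun g => if h : ∃ n, g ∉ K n then h.choose else 0
  refine ⟨u.coeff.support.sup f, fun n hn => ?_⟩
  have hK : ∀ g ∈ u.coeff.support, g ∈ K n → g = 1 := by
    intro g hg hgK
    by_contra hg1
    have hex : ∃ m, g ∉ K m := by
      by_contra h
      push_neg at h
      exact hg1 (Subgroup.mem_bot.mp (htriv ▸ Subgroup.mem_iInf.mpr h))
    have hne : g ∉ K (f g) := by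
      simp only [f, dif_pos hex]
      exact hex.choose_spec
    exact hne (anti (le_trans (Finset.le_sup hg) hn) hgK)
  have hmap : (MonoidAlgebra.mapDomainRingHom ℂ (QuotientGroup.mk' (K n)) z) ^ k
      = MonoidAlgebra.mapDomainRingHom ℂ (QuotientGroup.mk' (K n)) u := by
    rw [hu, map_pow]
  rw [hmap]
  show (Finsupp.mapDomain (QuotientGroup.mk' (K n)) u.coeff) 1 = u.coeff 1
  rw [Finsupp.mapDomain, Finsupp.sum_apply, Finsupp.sum]
  have hterm : ∀ g ∈ u.coeff.support,
      (Finsupp.single ((QuotientGroup.mk' (K n)) g) (u.coeff g)) 1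
        = if g = 1 then u.coeff g else 0 := by
    intro g hg
    rw [Finsupp.single_apply]
    by_cases h : g = 1
    · simp [h]
    · rw [if_neg h, if_neg]
      intro hq
      exact h (hK g hg ((QuotientGroup.eq_one_iff g).mp hq))
  rw [Finset.sum_congr rfl hterm]
  by_cases h1 : (1 : G) ∈ u.coeff.support
  · rw [Finset.sum_ite_eq' u.coeff.support (1 : G) (fun g => u.coeff g), if_pos h1]
  · rw [Finset.sum_ite_eq' u.coeff.support (1 : G) (fun g => u.coeff g), if_neg h1]
    exact (Finsupp.notMem_support_iff.mp h1).symm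
end
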